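/- Let D ≥ 2^n − 1 with n ≥ 2, and set D' = D − 2^n + 1. In the correspondence algebra A ⊗_R A of the split quadric (R = F_2[v,v^{-1}], with composition via the pushforward χ as above), the elements π_i = v^{-1} h^i ⊗ h^{D'−i} for 0 ≤ i ≤ D' satisfy π_i ∘ π_j = δ_{ij} π_i; i.e., they are pairwise orthogonal idempotents. -/
import Mathlib


open TensorProduct

/-- For a split quadric of dimension `D ≥ 2^n - 1` (`n ≥ 2`), the correspondences
`π_i = v⁻¹·(h^i ⊗ h^{D'-i})` for `0 ≤ i ≤ D' = D - 2^n + 1` satisfy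
`π_i ∘ π_j = δ_{ij} π_i`, i.e. they are pairwise orthogonal idempotents in the correspondence
algebra `A ⊗_R A` with composition given by the pushforward `χ`. -/
theorem split_quadric_tate_projectors_orthogonal
    (n d : ℕ) (hn : 2 ≤ n) (hd : 1 ≤ d)
    (R : Type*) [CommRing R] (h2 : (2 : R) = 0) (v : Rˣ)
    (A : Type*) [CommRing A] [Algebra R A]
    (h : A) (l : ℤ → A)
    (D : ℕ) (hD : D = 2 * d ∨ D = 2 * d + 1) (hDn : 2 ^ n - 1 ≤ D)
    (hlneg : ∀ s : ℤ, s < 0 → l s = 0)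
    (hhl : ∀ i : ℤ, 0 < i → h * l i = l (i - 1))
    (hhl0 : h * l 0 = 0)
    (hll : ∀ i j : ℤ, 0 ≤ i → i ≤ d → 0 ≤ j → j ≤ d →
      l i * l j = if i = d ∧ j = d ∧ D % 4 = 0 then l 0 else 0)
    (hpow : h ^ (d + 1) = (v : R) • l ((D : ℤ) - d - 2 ^ n))
    (χ : A →ₗ[R] R)
    (hχl0 : χ (l 0) = 1)
    (hχl : ∀ i : ℤ, 0 < i → χ (l i) = 0)
    (hχh : ∀ k : ℕ, (k : ℤ) ≠ (D : ℤ) + 1 - 2 ^ n → χ (h ^ k) = 0)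
    (hχhD : χ (h ^ (D + 1 - 2 ^ n)) = (v : R))
    (comp : A ⊗[R] A →ₗ[R] A ⊗[R] A →ₗ[R] A ⊗[R] A)
    (hcomp : ∀ a b c e : A,
      comp (a ⊗ₜ[R] b) (c ⊗ₜ[R] e) = χ (b * c) • (a ⊗ₜ[R] e)) :
    let hp : ℤ → A := fun k => if k < 0 then 0 else h ^ k.toNat
    let D' : ℤ := (D : ℤ) - 2 ^ n + 1
    let π : ℤ → A ⊗[R] A := fun i => (↑v⁻¹ : R) • (hp i ⊗ₜ[R] hp (D' - i))
    ∀ i ∈ Finset.Icc (0 : ℤ) D', ∀ j ∈ Finset.Icc (0 : ℤ) D',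
      comp (π i) (π j) = if i = j then π i else 0 := by
  intro hp D' π i hi j hj
  simp only [Finset.mem_Icc] at hi hj
  obtain ⟨hi0, hi1⟩ := hi
  obtain ⟨hj0, hj1⟩ := hj
  have hP : 2 ^ n ≤ D + 1 := by
    have h1 : 1 ≤ 2 ^ n := Nat.one_le_two_pow
    omega
  have hPz : ((2 : ℤ)) ^ n = ((2 ^ n : ℕ) : ℤ) := by push_cast; ring
  have hD' : D' = ((D + 1 - 2 ^ n : ℕ) : ℤ) := by
    simp only [D']; rw [hPz]; omega
  have hpi : hp i = h ^ i.toNat := by simp only [hp]; rw [if_neg (by omega)]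
  have hpj : hp j = h ^ j.toNat := by simp only [hp]; rw [if_neg (by omega)]
  have hpdi : hp (D' - i) = h ^ (D' - i).toNat := by
    simp only [hp]; rw [if_neg (by omega)]
  have hpdj : hp (D' - j) = h ^ (D' - j).toNat := by
    simp only [hp]; rw [if_neg (by omega)]
  simp only [π, hpi, hpj, hpdi, hpdj, map_smul, LinearMap.smul_apply, hcomp, ← pow_add]
  by_cases hij : i = j
  · subst hij
    rw [if_pos rfl]
    have he : (D' - i).toNat + i.toNat = D + 1 - 2 ^ n := by
      rw [hD'] at *; omega
    rw [he, hχhD, smul_smul, smul_smul, mul_assoc, Units.inv_mul, mul_one]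
  · rw [if_neg hij]
    have he : (((D' - i).toNat + j.toNat : ℕ) : ℤ) ≠ (D : ℤ) + 1 - 2 ^ n := by
      rw [hD'] at *; rw [hPz]; omega
    rw [hχh _ he, zero_smul, smul_zero, smul_zero]
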